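/- Let c₂, c₃ ∈ ℝ with c₂c₃ ≠ 0 and c₁ = 0. The lattice equation with polynomial E(w,x,y,z) = wy + c₃yz + c₂(wz + xy), i.e. u_{n,m}u_{n,m+1} + c₃u_{n,m+1}u_{n+1,m+1} + c₂(u_{n,m}u_{n+1,m+1} + u_{n+1,m}u_{n,m+1}) = 0, admits the five-point generalized symmetry with generator g_{n,m} = (u_{n,m}/u_{n,m+1} + c₃/c₂)(u_{n,m-1} + u_{n,m}·c₃/c₂): for every solution u : ℤ × ℤ → ℝ of the equation satisfying u_{n,m} ≠ 0 for all (n,m), and every (n,m) ∈ ℤ², the linearized equation g_{n,m}·∂₁E + g_{n+1,m}·∂₂E + g_{n,m+1}·∂₃E + g_{n+1,m+1}·∂₄E = 0 holds, where each ∂ᵢE is evaluated at (u_{n,m}, u_{n+1,m}, u_{n,m+1}, u_{n+1,m+1}). -/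

import Mathlib

theorem stmt_14
    (c₂ c₃ : ℝ) (h : c₂ * c₃ ≠ 0)
    (E : ℝ → ℝ → ℝ → ℝ → ℝ)
    (hE : ∀ w x y z : ℝ, E w x y z = w * y + c₃ * (y * z) + c₂ * (w * z + x * y))
    (u : ℤ × ℤ → ℝ)
    (hu : ∀ n m : ℤ, E (u (n, m)) (u (n + 1, m)) (u (n, m + 1)) (u (n + 1, m + 1)) = 0)
    (hne : ∀ n m : ℤ, u (n, m) ≠ 0)
    (g : ℤ × ℤ → ℝ)
    (hg : ∀ n m : ℤ, g (n, m) = (u (n, m) / u (n, m + 1) + c₃ / c₂) * (u (n, m - 1) + u (n, m) * (c₃ / c₂)))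
    (n m : ℤ) :
    g (n, m) * deriv (fun w => E w (u (n + 1, m)) (u (n, m + 1)) (u (n + 1, m + 1))) (u (n, m))
      + g (n + 1, m) * deriv (fun x => E (u (n, m)) x (u (n, m + 1)) (u (n + 1, m + 1))) (u (n + 1, m))
      + g (n, m + 1) * deriv (fun y => E (u (n, m)) (u (n + 1, m)) y (u (n + 1, m + 1))) (u (n, m + 1))
      + g (n + 1, m + 1) * deriv (fun z => E (u (n, m)) (u (n + 1, m)) (u (n, m + 1)) z) (u (n + 1, m + 1)) = 0 := by
  have hc2 : c₂ ≠ 0 := fun hc => h (by simp [hc])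
  have hc3 : c₃ ≠ 0 := fun hc => h (by simp [hc])
  simp only [hE] at hu ⊢
  -- abbreviations
  set a := u (n, m - 1) with ha
  set b := u (n + 1, m - 1) with hb
  set p := u (n, m) with hp
  set q := u (n + 1, m) with hq
  set r := u (n, m + 1) with hr
  set s := u (n + 1, m + 1) with hs
  set t := u (n, m + 1 + 1) with ht
  set v := u (n + 1, m + 1 + 1) with hv
  have hm : m - 1 + 1 = m := by ring
  have h1 : a * p + c₃ * (p * q) + c₂ * (a * q + b * p) = 0 := by
    have := hu n (m - 1); rw [hm] at this; rw [← hp, ← hq] at this; linarith [this]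
  have h2 : p * r + c₃ * (r * s) + c₂ * (p * s + q * r) = 0 := hu n m
  have h3 : r * t + c₃ * (t * v) + c₂ * (r * v + s * t) = 0 := hu n (m + 1)
  have e1 : deriv (fun w => w * r + c₃ * (r * s) + c₂ * (w * s + q * r)) p = r + c₂ * s := by
    have h' : (fun w => w * r + c₃ * (r * s) + c₂ * (w * s + q * r)) = (fun w => (r + c₂ * s) * w + (c₃ * (r * s) + c₂ * (q * r))) := by funext w; ring
    rw [h', deriv_add_const]; simpa using ((hasDerivAt_id p).const_mul (r + c₂ * s)).deriv
  have e2 : deriv (fun x => p * r + c₃ * (r * s) + c₂ * (p * s + x * r)) q = c₂ * r := by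
    have h' : (fun x => p * r + c₃ * (r * s) + c₂ * (p * s + x * r)) = (fun x => (c₂ * r) * x + (p * r + c₃ * (r * s) + c₂ * (p * s))) := by funext x; ring
    rw [h', deriv_add_const]; simpa using ((hasDerivAt_id q).const_mul (c₂ * r)).deriv
  have e3 : deriv (fun y => p * y + c₃ * (y * s) + c₂ * (p * s + q * y)) r = p + c₃ * s + c₂ * q := by
    have h' : (fun y => p * y + c₃ * (y * s) + c₂ * (p * s + q * y)) = (fun y => (p + c₃ * s + c₂ * q) * y + (c₂ * (p * s))) := by funext y; ring
    rw [h', deriv_add_const]; simpa using ((hasDerivAt_id r).const_mul (p + c₃ * s + c₂ * q)).deriv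
  have e4 : deriv (fun z => p * r + c₃ * (r * z) + c₂ * (p * z + q * r)) s = c₃ * r + c₂ * p := by
    have h' : (fun z => p * r + c₃ * (r * z) + c₂ * (p * z + q * r)) = (fun z => (c₃ * r + c₂ * p) * z + (p * r + c₂ * (q * r))) := by funext z; ring
    rw [h', deriv_add_const]; simpa using ((hasDerivAt_id s).const_mul (c₃ * r + c₂ * p)).deriv
  rw [e1, e2, e3, e4]
  have hg00 := hg n m
  have hg10 := hg (n+1) m
  have hg01 : g (n, m+1) = (r / t + c₃ / c₂) * (p + r * (c₃ / c₂)) := by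
    have := hg n (m+1); simpa [add_sub_cancel_right, ← hp, ← hr, ← ht] using this
  have hg11 : g (n+1, m+1) = (s / v + c₃ / c₂) * (q + s * (c₃ / c₂)) := by
    have := hg (n+1) (m+1); simpa [add_sub_cancel_right, ← hq, ← hs, ← hv] using this
  rw [hg00, hg10, hg01, hg11]
  rw [← hp, ← hq, ← hr, ← hs, ← ha, ← hb]
  have hpne : p ≠ 0 := hne n m
  have hrne : r ≠ 0 := hne n (m+1)
  have hsne : s ≠ 0 := hne (n+1) (m+1)
  have htne : t ≠ 0 := hne n (m+1+1)
  have hvne : v ≠ 0 := hne (n+1) (m+1+1)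
  field_simp
  linear_combination (-(c₂^1 * (r^2*t*v)) - c₂^2 * (r*s*t*v)) * h1
    + (c₂^1 * (a*r*t*v) + c₂^2 * (a*s*t*v) + c₂^2 * (b*r*t*v) + c₂^2 * (p*r*s*v)
       + c₂^2 * (p*s^2*t) + 2 * c₂^1 * c₃ * (p*s*t*v) + c₂^1 * c₃ * (q*r*t*v)
       + c₂^1 * c₃ * (r^2*s*v) + c₂^1 * c₃ * (r*s^2*t) + 2 * c₂^0 * c₃^2 * (r*s*t*v)) * h2
    + (-(c₂^2 * (p^2*s^2)) - c₂^1 * c₃ * (p*r*s^2)) * h3
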